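/- Let n ≥ 3 and let W_n act on ℤ^n via the representation ρ. Then the first group cohomology H¹(W_n, ℤ^n) is isomorphic to ℤ^{n(n−2)} ⊕ (ℤ/2)^n. -/

import Mathlib

/-- The relators `x̄_i²` of `W_n`, the free product of `n` copies of `C_2`. -/
def Wrels (n : ℕ) : Set (FreeGroup (Fin n)) :=
  Set.range fun i : Fin n => FreeGroup.of i ^ 2

/-- The group `W_n = C_2 * ⋯ * C_2` (`n` factors). -/
abbrev W (n : ℕ) : Type := PresentedGroup (Wrels n)

/-- The generators `x̄_1, …, x̄_n` of `W_n`. -/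
def xbar (n : ℕ) (i : Fin n) : W n := PresentedGroup.of i

/-- The linear map `diag(-1, …, -1, 1, -1, …, -1)` on `ℤⁿ` (entry `1` in position `i`). -/
def Dmap (n : ℕ) (i : Fin n) : (Fin n → ℤ) →ₗ[ℤ] (Fin n → ℤ) where
  toFun v := fun j => if j = i then v j else -v j
  map_add' u v := by funext j; by_cases h : j = i <;> simp [h] <;> ring
  map_smul' c v := by funext j; by_cases h : j = i <;> simp [h]

theorem Dmap_sq (n : ℕ) (i : Fin n) : Dmap n i * Dmap n i = 1 := by
  apply LinearMap.ext
  intro v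
  funext j
  by_cases h : j = i <;> simp [Dmap, Module.End.mul_apply, h]

/-- `Dmap n i` as a unit of the endomorphism ring, i.e. a linear automorphism. -/
def Dunit (n : ℕ) (i : Fin n) : ((Fin n → ℤ) →ₗ[ℤ] (Fin n → ℤ))ˣ :=
  ⟨Dmap n i, Dmap n i, Dmap_sq n i, Dmap_sq n i⟩

theorem Dunit_sq (n : ℕ) (i : Fin n) : Dunit n i ^ 2 = 1 := by
  rw [sq]
  exact Units.ext (Dmap_sq n i)

/-- The representation `ρ : W_n → GL_n(ℤ)`, with `ρ(x̄_i) = diag(-1,…,-1,1,-1,…,-1)`. -/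
def rho (n : ℕ) : W n →* ((Fin n → ℤ) →ₗ[ℤ] (Fin n → ℤ))ˣ :=
  PresentedGroup.toGroup (f := Dunit n) (by
    rintro r ⟨i, rfl⟩
    simp [Dunit_sq])

theorem rho_of (n : ℕ) (i : Fin n) : rho n (xbar n i) = Dunit n i :=
  PresentedGroup.toGroup.of _

/-- `ρ` as a representation of `W_n` on `ℤⁿ`. -/
def rep (n : ℕ) : Representation ℤ (W n) (Fin n → ℤ) :=
  (Units.coeHom ((Fin n → ℤ) →ₗ[ℤ] (Fin n → ℤ))).comp (rho n)

namespace Stmt18Aux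

open groupCohomology

theorem xbar_sq (n : ℕ) (i : Fin n) : xbar n i ^ 2 = 1 := by
  rw [xbar, PresentedGroup.of, ← map_pow]
  exact PresentedGroup.one_of_mem ⟨i, rfl⟩

theorem rep_xbar (n : ℕ) (i : Fin n) (v : Fin n → ℤ) :
    rep n (xbar n i) v = fun j => if j = i then v j else -v j := by
  show (Units.coeHom _ (rho n (xbar n i))) v = _
  rw [rho_of]
  rfl

/-- The action of `W n` on `Multiplicative ℤⁿ` as multiplicative automorphisms. -/
def phi (n : ℕ) : W n →* MulAut (Multiplicative (Fin n → ℤ)) where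
  toFun g :=
    { toFun := fun x => Multiplicative.ofAdd (rep n g x.toAdd)
      invFun := fun x => Multiplicative.ofAdd (rep n g⁻¹ x.toAdd)
      left_inv := fun x => by
        simp [← Module.End.mul_apply, ← map_mul]
      right_inv := fun x => by
        simp [← Module.End.mul_apply, ← map_mul]
      map_mul' := fun x y => by
        simp [toAdd_mul, ← ofAdd_add] }
  map_one' := by
    ext x
    simp
  map_mul' g h := by
    ext x
    simp [Module.End.mul_apply]

theorem phi_apply (n : ℕ) (g : W n) (x : Multiplicative (Fin n → ℤ)) :
    phi n g x = Multiplicative.ofAdd (rep n g x.toAdd) := rfl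

/-- The semidirect product `ℤⁿ ⋊ W n`. -/
abbrev SDP (n : ℕ) : Type := Multiplicative (Fin n → ℤ) ⋊[phi n] W n

end Stmt18Aux
namespace Stmt18Aux

open groupCohomology

/-- A 1-cocycle gives a splitting homomorphism `W n →* SDP n`. -/
def homOf (n : ℕ) (f : cocycles₁ (Rep.of (rep n))) : W n →* SDP n where
  toFun g := ⟨Multiplicative.ofAdd (show Fin n → ℤ from f g), g⟩
  map_one' := by
    apply SemidirectProduct.ext
    · show Multiplicative.ofAdd (show Fin n → ℤ from f 1) = 1
      rw [show (show Fin n → ℤ from f 1) = 0 from cocycles₁_map_one f]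
      rfl
    · rfl
  map_mul' g h := by
    apply SemidirectProduct.ext
    · show Multiplicative.ofAdd (show Fin n → ℤ from f (g * h)) =
        Multiplicative.ofAdd (show Fin n → ℤ from f g) *
          phi n g (Multiplicative.ofAdd (show Fin n → ℤ from f h))
      rw [phi_apply, toAdd_ofAdd, ← ofAdd_add]
      congr 1
      have key : (show Fin n → ℤ from f (g * h)) = rep n g (show Fin n → ℤ from f h) + (show Fin n → ℤ from f g) :=
        (mem_cocycles₁_iff (A := Rep.of (rep n)) f).1 f.2 g h
      rw [key]
      exact add_comm _ _
    · rfl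

theorem homOf_left (n : ℕ) (f : cocycles₁ (Rep.of (rep n))) (g : W n) :
    (homOf n f g).left = Multiplicative.ofAdd (show Fin n → ℤ from f g) := rfl

/-- Two 1-cocycles agreeing on the generators are equal. -/
theorem cocycle_ext (n : ℕ) (f₁ f₂ : cocycles₁ (Rep.of (rep n)))
    (h : ∀ i, f₁ (xbar n i) = f₂ (xbar n i)) : f₁ = f₂ := by
  have key : homOf n f₁ = homOf n f₂ := by
    apply PresentedGroup.ext
    intro i
    have : (⟨Multiplicative.ofAdd (show Fin n → ℤ from f₁ (xbar n i)), xbar n i⟩ : SDP n)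
        = ⟨Multiplicative.ofAdd (show Fin n → ℤ from f₂ (xbar n i)), xbar n i⟩ := by
      rw [show (show Fin n → ℤ from f₁ (xbar n i)) = f₂ (xbar n i) from h i]
    exact this
  apply cocycles₁_ext
  intro g
  have h2 := congrArg (fun φ : W n →* SDP n => (φ g).left.toAdd) key
  exact h2

/-- Extension: any data with vanishing diagonal extends to a cocycle. -/
theorem exists_cocycle (n : ℕ) (data : Fin n → (Fin n → ℤ))
    (hdata : ∀ i, data i i = 0) :
    ∃ f : cocycles₁ (Rep.of (rep n)), ∀ i, (show Fin n → ℤ from f (xbar n i)) = data i := by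
  set u : Fin n → SDP n := fun i => ⟨Multiplicative.ofAdd (data i), xbar n i⟩ with hu_def
  have hu : ∀ i, u i * u i = 1 := by
    intro i
    apply SemidirectProduct.ext
    · show Multiplicative.ofAdd (data i) * phi n (xbar n i) (Multiplicative.ofAdd (data i)) = 1
      rw [phi_apply, toAdd_ofAdd, ← ofAdd_add, rep_xbar]
      show Multiplicative.ofAdd _ = Multiplicative.ofAdd 0
      congr 1
      funext j
      by_cases hj : j = i
      · subst hj; simp [hdata]
      · simp [hj]
    · show xbar n i * xbar n i = 1
      rw [← sq, xbar_sq]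
  have hrel : ∀ r ∈ Wrels n, FreeGroup.lift u r = 1 := by
    rintro r ⟨i, rfl⟩
    rw [map_pow, sq, FreeGroup.lift_apply_of, hu]
  set F : W n →* SDP n := PresentedGroup.toGroup hrel with hF
  have hFof : ∀ i, F (xbar n i) = u i := fun i => PresentedGroup.toGroup.of hrel
  have hright : ∀ g : W n, (F g).right = g := by
    have : (SemidirectProduct.rightHom).comp F = MonoidHom.id (W n) := by
      apply PresentedGroup.ext
      intro i
      show ((F (xbar n i)).right) = xbar n i
      rw [hFof]
    intro g
    exact congrArg (fun φ : W n →* W n => φ g) this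
  refine ⟨⟨fun g => (F g).left.toAdd, ?_⟩, ?_⟩
  · rw [mem_cocycles₁_iff]
    intro g h
    show ((F (g * h)).left).toAdd = rep n g ((F h).left.toAdd) + (F g).left.toAdd
    rw [map_mul]
    show ((F g).left * phi n (F g).right (F h).left).toAdd = _
    rw [hright, toAdd_mul, phi_apply, toAdd_ofAdd]
    exact add_comm _ _
  · intro i
    show ((F (xbar n i)).left).toAdd = data i
    rw [hFof]
    rfl

theorem rep_xbar_apply (n : ℕ) (i : Fin n) (v : Fin n → ℤ) (j : Fin n) :
    rep n (xbar n i) v j = if j = i then v j else -v j := by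
  rw [rep_xbar]

theorem cocycle_diag (n : ℕ) (f : cocycles₁ (Rep.of (rep n))) (i : Fin n) :
    (show Fin n → ℤ from f (xbar n i)) i = 0 := by
  have h : (show Fin n → ℤ from f (xbar n i * xbar n i))
      = rep n (xbar n i) (show Fin n → ℤ from f (xbar n i)) + (show Fin n → ℤ from f (xbar n i)) :=
    (mem_cocycles₁_iff (A := Rep.of (rep n)) f).1 f.2 (xbar n i) (xbar n i)
  rw [← sq, xbar_sq] at h
  rw [show (show Fin n → ℤ from f (1 : W n)) = 0 from cocycles₁_map_one f] at h
  have h2 : (0 : ℤ) = rep n (xbar n i) (show Fin n → ℤ from f (xbar n i)) i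
      + (show Fin n → ℤ from f (xbar n i)) i := congrFun h i
  rw [rep_xbar_apply, if_pos rfl] at h2
  dsimp only at h2 ⊢
  omega

end Stmt18Aux
namespace Stmt18Aux

open groupCohomology

/-- A distinguished index different from `j`. -/
def i0 (n : ℕ) (hn : 3 ≤ n) (j : Fin n) : Fin n :=
  if j = ⟨0, by omega⟩ then ⟨1, by omega⟩ else ⟨0, by omega⟩

theorem i0_ne (n : ℕ) (hn : 3 ≤ n) (j : Fin n) : i0 n hn j ≠ j := by
  unfold i0
  split
  · rename_i h; rw [h]; simp [Fin.ext_iff]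
  · rename_i h; exact fun hc => h hc.symm

/-- The index type for the free part. -/
abbrev T (n : ℕ) (hn : 3 ≤ n) : Type :=
  Σ j : Fin n, {i : Fin n // i ≠ j ∧ i ≠ i0 n hn j}

theorem card_T (n : ℕ) (hn : 3 ≤ n) : Fintype.card (T n hn) = n * (n - 2) := by
  rw [Fintype.card_sigma]
  have hcard : ∀ j : Fin n,
      Fintype.card {i : Fin n // i ≠ j ∧ i ≠ i0 n hn j} = n - 2 := by
    intro j
    rw [Fintype.card_subtype]
    have hfil : Finset.filter (fun i => i ≠ j ∧ i ≠ i0 n hn j) Finset.univ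
        = ({j, i0 n hn j} : Finset (Fin n))ᶜ := by
      ext i
      simp [not_or]
    rw [hfil, Finset.card_compl,
      Finset.card_insert_of_notMem (by simp [Ne.symm (i0_ne n hn j)]),
      Finset.card_singleton, Fintype.card_fin]
  simp only [hcard, Finset.sum_const, Finset.card_univ, Fintype.card_fin, smul_eq_mul]

/-- Enumeration of `T n hn`. -/
noncomputable def eT (n : ℕ) (hn : 3 ≤ n) : T n hn ≃ Fin (n * (n - 2)) :=
  Fintype.equivFinOfCardEq (card_T n hn)

/-- Evaluation of a cocycle at a generator. -/
def ev (n : ℕ) (f : cocycles₁ (Rep.of (rep n))) (i j : Fin n) : ℤ :=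
  (show Fin n → ℤ from f (xbar n i)) j

theorem ev_add (n : ℕ) (f g : cocycles₁ (Rep.of (rep n))) (i j : Fin n) :
    ev n (f + g) i j = ev n f i j + ev n g i j := rfl

/-- The main homomorphism from cocycles to the target abelian group. -/
noncomputable def Phi (n : ℕ) (hn : 3 ≤ n) :
    cocycles₁ (Rep.of (rep n)) →+ (Fin (n * (n - 2)) → ℤ) × (Fin n → ZMod 2) where
  toFun f :=
    (fun p => ev n f ((eT n hn).symm p).2.1 ((eT n hn).symm p).1
        - ev n f (i0 n hn ((eT n hn).symm p).1) ((eT n hn).symm p).1,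
     fun j => ((ev n f (i0 n hn j) j : ℤ) : ZMod 2))
  map_zero' := by
    refine Prod.ext ?_ ?_ <;> funext x <;>
      simp only [show ∀ i j, ev n 0 i j = 0 from fun i j => rfl] <;> simp
  map_add' f g := by
    refine Prod.ext ?_ ?_ <;> funext x <;>
      simp only [Prod.fst_add, Prod.snd_add, Pi.add_apply, ev_add] <;>
      push_cast <;> ring

end Stmt18Aux
namespace Stmt18Aux

open groupCohomology

theorem Phi_fst (n : ℕ) (hn : 3 ≤ n) (f : cocycles₁ (Rep.of (rep n)))
    (p : Fin (n * (n - 2))) :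
    (Phi n hn f).1 p = ev n f ((eT n hn).symm p).2.1 ((eT n hn).symm p).1
        - ev n f (i0 n hn ((eT n hn).symm p).1) ((eT n hn).symm p).1 := rfl

theorem Phi_snd (n : ℕ) (hn : 3 ≤ n) (f : cocycles₁ (Rep.of (rep n))) (j : Fin n) :
    (Phi n hn f).2 j = ((ev n f (i0 n hn j) j : ℤ) : ZMod 2) := rfl

theorem surj_Phi (n : ℕ) (hn : 3 ≤ n) : Function.Surjective (Phi n hn) := by
  rintro ⟨c, d⟩
  classical
  set data : Fin n → Fin n → ℤ := fun i j =>
    if hij : i = j then 0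
    else if hi0 : i = i0 n hn j then ((d j).val : ℤ)
    else ((d j).val : ℤ) + c (eT n hn ⟨j, ⟨i, hij, hi0⟩⟩) with hdata_def
  obtain ⟨f, hf⟩ := exists_cocycle n data (fun i => dif_pos rfl)
  have hev : ∀ i j, ev n f i j = data i j := fun i j => congrFun (hf i) j
  have hdata_i0 : ∀ j, data (i0 n hn j) j = ((d j).val : ℤ) := fun j => by
    simp only [hdata_def]
    rw [dif_neg (i0_ne n hn j)]
    simp
  refine ⟨f, Prod.ext ?_ ?_⟩
  · funext p
    rw [Phi_fst, hev, hev, hdata_i0]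
    set t := (eT n hn).symm p with ht
    simp only [hdata_def]
    rw [dif_neg t.2.2.1, dif_neg t.2.2.2]
    have heta : (⟨t.1, ⟨t.2.1, t.2.2.1, t.2.2.2⟩⟩ : T n hn) = t := rfl
    rw [heta, ht, Equiv.apply_symm_apply]
    show _ = c p
    ring
  · funext j
    rw [Phi_snd, hev, hdata_i0]
    show _ = d j
    push_cast
    exact ZMod.natCast_rightInverse (d j)

theorem ker_Phi (n : ℕ) (hn : 3 ≤ n) :
    LinearMap.ker ((Phi n hn).toIntLinearMap) =
      (coboundaries₁ (Rep.of (rep n))).comap (cocycles₁ (Rep.of (rep n))).subtype := by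
  apply le_antisymm
  · -- ker ⊆ coboundaries
    intro f hf
    rw [LinearMap.mem_ker] at hf
    have hf' : Phi n hn f = 0 := hf
    have hfree : ∀ (j i : Fin n), i ≠ j → i ≠ i0 n hn j →
        ev n f i j = ev n f (i0 n hn j) j := by
      intro j i hi hi0
      set t : T n hn := ⟨j, ⟨i, hi, hi0⟩⟩ with htt
      have h1 : (Phi n hn f).1 (eT n hn t) = 0 := by rw [hf']; rfl
      rw [Phi_fst, Equiv.symm_apply_apply] at h1
      have h2 : ev n f i j - ev n f (i0 n hn j) j = 0 := h1
      linarith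
    have htor : ∀ j, ∃ m : ℤ, ev n f (i0 n hn j) j = 2 * m := by
      intro j
      have h1 : (Phi n hn f).2 j = 0 := by rw [hf']; rfl
      rw [Phi_snd] at h1
      obtain ⟨m, hm⟩ := (ZMod.intCast_zmod_eq_zero_iff_dvd _ 2).1 h1
      exact ⟨m, hm⟩
    choose m hm using htor
    set v : Fin n → ℤ := fun j => -(m j) with hv
    set fb : cocycles₁ (Rep.of (rep n)) :=
      ⟨(d₀₁ (Rep.of (rep n))).hom v, coboundaries₁_le_cocycles₁ _ ⟨v, rfl⟩⟩ with hfb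
    have hkey : f = fb := by
      apply cocycle_ext
      intro i
      funext j
      show ev n f i j = rep n (xbar n i) v j - v j
      rw [rep_xbar_apply]
      by_cases hj : j = i
      · rw [if_pos hj, hj]
        simpa [ev] using cocycle_diag n f i
      · rw [if_neg hj]
        have hvj : v j = -(m j) := rfl
        rw [hvj]
        by_cases hii0 : i = i0 n hn j
        · rw [hii0, hm j]; ring
        · rw [hfree j i (fun hc => hj hc.symm) hii0, hm j]; ring
    rw [hkey]
    exact ⟨v, rfl⟩
  · -- coboundaries ⊆ ker
    intro f hf
    obtain ⟨v, hv⟩ := hf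
    have hval : ∀ i j, ev n f i j = rep n (xbar n i) v j - v j := by
      intro i j
      show ((cocycles₁ (Rep.of (rep n))).subtype f (xbar n i)) j = _
      rw [← hv]
      rfl
    rw [LinearMap.mem_ker]
    have : Phi n hn f = 0 := by
      refine Prod.ext ?_ ?_
      · funext p
        rw [Phi_fst]
        set t := (eT n hn).symm p
        rw [hval, hval, rep_xbar_apply, rep_xbar_apply,
          if_neg (fun hc : t.1 = t.2.1 => t.2.2.1 hc.symm),
          if_neg (fun hc : t.1 = i0 n hn t.1 => i0_ne n hn t.1 hc.symm)]
        show _ = (0 : (Fin (n * (n - 2)) → ℤ) × (Fin n → ZMod 2)).1 p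
        simp
      · funext j
        rw [Phi_snd, hval, rep_xbar_apply,
          if_neg (fun hc : j = i0 n hn j => i0_ne n hn j hc.symm)]
        show _ = (0 : (Fin (n * (n - 2)) → ℤ) × (Fin n → ZMod 2)).2 j
        have h2 : ∀ x : ZMod 2, -x - x = 0 := by decide
        push_cast
        simp only [Prod.snd_zero, Pi.zero_apply]
        exact h2 _
    exact this

theorem ker_H1π (n : ℕ) :
    LinearMap.ker (H1π (Rep.of (rep n))).hom =
      (coboundaries₁ (Rep.of (rep n))).comap (cocycles₁ (Rep.of (rep n))).subtype := by
  ext x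
  rw [LinearMap.mem_ker, Submodule.mem_comap]
  exact H1π_eq_zero_iff x

theorem surj_H1π (n : ℕ) : Function.Surjective (H1π (Rep.of (rep n))).hom :=
  (ModuleCat.epi_iff_surjective _).1 inferInstance

end Stmt18Aux

/-- for `n ≥ 3`, `H¹(W_n, ℤⁿ) ≅ ℤ^{n(n-2)} ⊕ (ℤ/2)ⁿ`
for the action given by `ρ`. -/
theorem stmt18 (n : ℕ) (hn : 3 ≤ n) :
    Nonempty (groupCohomology.H1 (Rep.of (rep n)) ≃+
      ((Fin (n * (n - 2)) → ℤ) × (Fin n → ZMod 2))) := by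
  exact ⟨((((groupCohomology.H1π (Rep.of (rep n))).hom.quotKerEquivOfSurjective
      (Stmt18Aux.surj_H1π n)).symm.trans
    (Submodule.quotEquivOfEq _ _
      ((Stmt18Aux.ker_H1π n).trans (Stmt18Aux.ker_Phi n hn).symm))).trans
    ((Stmt18Aux.Phi n hn).toIntLinearMap.quotKerEquivOfSurjective
      (Stmt18Aux.surj_Phi n hn))).toAddEquiv⟩
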